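/- Let n ≥ 2 be an integer and let 1 ≤ p₀ < n, and let A > 0. Assume the Sobolev inequality (∫ |u|^{n p₀/(n−p₀)})^{(n−p₀)/n} ≤ A ∫ |∇u|^{p₀} holds for every continuously differentiable u : ℝ^n → ℝ with compact support. Then for every real p with p₀ < p ≤ n² p₀ / ((n−p₀)² + n p₀), setting r_p = p(n−p₀)/(p₀(n−p)), the inequality (∫ |u|^{n p/(n−p)})^{(n−p)/n} ≤ (A r_p^{p₀})^{p/p₀} ∫ |∇u|^p holds for every continuously differentiable u : ℝ^n → ℝ with compact support. -/

import Mathlib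

open MeasureTheory

theorem sobolev_induction_step_infinite_volume
    (n : ℕ) (hn : 2 ≤ n) (p₀ A : ℝ) (hp₀1 : 1 ≤ p₀) (hp₀n : p₀ < n) (hA : 0 < A)
    (hSob : ∀ u : EuclideanSpace ℝ (Fin n) → ℝ, ContDiff ℝ 1 u → HasCompactSupport u →
      (∫ x, |u x| ^ ((n : ℝ) * p₀ / ((n : ℝ) - p₀))) ^ (((n : ℝ) - p₀) / n) ≤
        A * ∫ x, ‖fderiv ℝ u x‖ ^ p₀)
    (p : ℝ) (hp : p₀ < p) (hple : p ≤ (n : ℝ) ^ 2 * p₀ / (((n : ℝ) - p₀) ^ 2 + n * p₀)) :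
    ∀ u : EuclideanSpace ℝ (Fin n) → ℝ, ContDiff ℝ 1 u → HasCompactSupport u →
      (∫ x, |u x| ^ ((n : ℝ) * p / ((n : ℝ) - p))) ^ (((n : ℝ) - p) / n) ≤
        (A * (p * ((n : ℝ) - p₀) / (p₀ * ((n : ℝ) - p))) ^ p₀) ^ (p / p₀) *
          ∫ x, ‖fderiv ℝ u x‖ ^ p := by
  intro u hu hu_supp
  have hn2 : (2 : ℝ) ≤ (n : ℝ) := by exact_mod_cast hn
  have hp₀pos : 0 < p₀ := lt_of_lt_of_le one_pos hp₀1
  have hppos : 0 < p := hp₀pos.trans hp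
  have hnp₀ : (0 : ℝ) < (n : ℝ) - p₀ := sub_pos.mpr hp₀n
  have hnpos : (0 : ℝ) < (n : ℝ) := by linarith
  have hpn : p < (n : ℝ) := by
    have hden : (0 : ℝ) < ((n : ℝ) - p₀) ^ 2 + n * p₀ := by positivity
    have h2 : (n : ℝ) ^ 2 * p₀ / (((n : ℝ) - p₀) ^ 2 + n * p₀) < n := by
      rw [div_lt_iff₀ hden]
      nlinarith [sq_nonneg ((n : ℝ) - p₀)]
    linarith
  have hnp : (0 : ℝ) < (n : ℝ) - p := sub_pos.mpr hpn
  set γ : ℝ := p * ((n : ℝ) - p₀) / (p₀ * ((n : ℝ) - p)) with hγdef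
  have hγ : 1 < γ := by
    rw [hγdef, lt_div_iff₀ (by positivity)]
    nlinarith
  have hγpos : 0 < γ := lt_trans one_pos hγ
  set v : EuclideanSpace ℝ (Fin n) → ℝ := fun x => |u x| ^ γ with hvdef
  -- smoothness of v
  have hv_cd : ContDiff ℝ 1 v := by
    have h := hu.norm_rpow hγ
    simpa [Real.norm_eq_abs] using h
  have hv_supp : HasCompactSupport v := by
    have : v = (fun t : ℝ => |t| ^ γ) ∘ u := rfl
    rw [this]
    exact hu_supp.comp_left (by simp [Real.zero_rpow hγpos.ne'])
  have hu_diff : Differentiable ℝ u := hu.differentiable one_ne_zero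
  have hfd : ∀ x, HasFDerivAt v ((γ * |u x| ^ (γ - 2) * u x) • fderiv ℝ u x) x := fun x =>
    (hasDerivAt_abs_rpow (u x) hγ).comp_hasFDerivAt x (hu_diff x).hasFDerivAt
  have habs : ∀ t : ℝ, |γ * |t| ^ (γ - 2) * t| = γ * |t| ^ (γ - 1) := by
    intro t
    rcases eq_or_ne t 0 with rfl | ht
    · simp [Real.zero_rpow (by linarith : γ - 1 ≠ 0)]
    · rw [abs_mul, abs_mul, abs_of_pos hγpos,
        abs_of_nonneg (Real.rpow_nonneg (abs_nonneg t) _), mul_assoc,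
        ← Real.rpow_add_one (abs_ne_zero.mpr ht)]
      ring_nf
  have hnormfd : ∀ x, ‖fderiv ℝ v x‖ = γ * |u x| ^ (γ - 1) * ‖fderiv ℝ u x‖ := by
    intro x
    rw [(hfd x).fderiv, norm_smul, Real.norm_eq_abs, habs]
  -- exponent identities
  have hnp₀ne : ((n : ℝ) - p₀) ≠ 0 := hnp₀.ne'
  have hnpne : ((n : ℝ) - p) ≠ 0 := hnp.ne'
  have eγ1 : γ * ((n : ℝ) * p₀ / ((n : ℝ) - p₀)) = (n : ℝ) * p / ((n : ℝ) - p) := by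
    rw [hγdef]; field_simp
  have hppne : p - p₀ ≠ 0 := by linarith
  have eγ2 : (γ - 1) * p₀ * (p / (p - p₀)) = (n : ℝ) * p / ((n : ℝ) - p) := by
    rw [hγdef]; field_simp; ring
  have eγ3 : p₀ * (p / p₀) = p := by field_simp
  -- pointwise integrand identities
  have key1 : ∀ x, |v x| ^ ((n : ℝ) * p₀ / ((n : ℝ) - p₀)) =
      |u x| ^ ((n : ℝ) * p / ((n : ℝ) - p)) := by
    intro x
    rw [hvdef, abs_of_nonneg (Real.rpow_nonneg (abs_nonneg (u x)) γ),
      ← Real.rpow_mul (abs_nonneg (u x)), eγ1]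
  have key2 : ∀ x, ‖fderiv ℝ v x‖ ^ p₀ =
      γ ^ p₀ * (|u x| ^ ((γ - 1) * p₀) * ‖fderiv ℝ u x‖ ^ p₀) := by
    intro x
    rw [hnormfd x, Real.mul_rpow (by positivity) (norm_nonneg _),
      Real.mul_rpow hγpos.le (Real.rpow_nonneg (abs_nonneg _) _),
      ← Real.rpow_mul (abs_nonneg (u x)), mul_assoc]
  -- Hölder setup
  set f : EuclideanSpace ℝ (Fin n) → ℝ := fun x => |u x| ^ ((γ - 1) * p₀) with hfdef
  set g : EuclideanSpace ℝ (Fin n) → ℝ := fun x => ‖fderiv ℝ u x‖ ^ p₀ with hgdef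
  have hexp_pos : 0 < (γ - 1) * p₀ := by nlinarith
  have hconj : Real.HolderConjugate (p / (p - p₀)) (p / p₀) := by
    rw [Real.holderConjugate_iff]
    constructor
    · rw [lt_div_iff₀ (by linarith : (0:ℝ) < p - p₀)]; linarith
    · field_simp; ring
  have hf_cont : Continuous f := by
    rw [hfdef]
    exact (Real.continuous_rpow_const hexp_pos.le).comp (continuous_abs.comp hu.continuous)
  have hf_supp : HasCompactSupport f := by
    have : f = (fun t : ℝ => |t| ^ ((γ - 1) * p₀)) ∘ u := rfl
    rw [this]
    exact hu_supp.comp_left (by simp [Real.zero_rpow hexp_pos.ne'])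
  have hg_cont : Continuous g := by
    rw [hgdef]
    exact (Real.continuous_rpow_const hp₀pos.le).comp
      ((hu.continuous_fderiv one_ne_zero).norm)
  have hg_supp : HasCompactSupport g := by
    have : g = (fun L : EuclideanSpace ℝ (Fin n) →L[ℝ] ℝ => ‖L‖ ^ p₀) ∘ (fderiv ℝ u) := rfl
    rw [this]
    exact (hu_supp.fderiv ℝ).comp_left (by simp [Real.zero_rpow hp₀pos.ne'])
  have hHolder := integral_mul_le_Lp_mul_Lq_of_nonneg (μ := volume) hconj
    (Filter.Eventually.of_forall fun x => Real.rpow_nonneg (abs_nonneg (u x)) _)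
    (Filter.Eventually.of_forall fun x => Real.rpow_nonneg (norm_nonneg _) _)
    (hf_cont.memLp_of_hasCompactSupport hf_supp)
    (hg_cont.memLp_of_hasCompactSupport hg_supp)
  -- rewrite the Hölder bound
  have hfq : ∀ x, f x ^ (p / (p - p₀)) = |u x| ^ ((n : ℝ) * p / ((n : ℝ) - p)) := by
    intro x
    rw [hfdef, ← Real.rpow_mul (abs_nonneg (u x)), eγ2]
  have hgq : ∀ x, g x ^ (p / p₀) = ‖fderiv ℝ u x‖ ^ p := by
    intro x
    rw [hgdef, ← Real.rpow_mul (norm_nonneg _), eγ3]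
  change ∫ x, f x * g x ≤ (∫ x, f x ^ (p / (p - p₀))) ^ (1 / (p / (p - p₀))) *
    (∫ x, g x ^ (p / p₀)) ^ (1 / (p / p₀)) at hHolder
  simp only [hfq, hgq] at hHolder
  set X : ℝ := ∫ x, |u x| ^ ((n : ℝ) * p / ((n : ℝ) - p)) with hXdef
  set Y : ℝ := ∫ x, ‖fderiv ℝ u x‖ ^ p with hYdef
  have hX0 : 0 ≤ X := integral_nonneg fun x => Real.rpow_nonneg (abs_nonneg _) _
  have hY0 : 0 ≤ Y := integral_nonneg fun x => Real.rpow_nonneg (norm_nonneg _) _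
  -- the Sobolev inequality applied to v
  have h1 : X ^ (((n : ℝ) - p₀) / n) ≤ A * ∫ x, ‖fderiv ℝ v x‖ ^ p₀ := by
    have := hSob v hv_cd hv_supp
    simpa only [key1] using this
  have h2 : (∫ x, ‖fderiv ℝ v x‖ ^ p₀) = γ ^ p₀ * ∫ x, f x * g x := by
    rw [← integral_const_mul]
    exact integral_congr_ae (Filter.Eventually.of_forall fun x => key2 x)
  have hC : (0:ℝ) < A * γ ^ p₀ := by positivity
  have h3 : X ^ (((n : ℝ) - p₀) / n) ≤
      A * γ ^ p₀ * (X ^ ((p - p₀) / p) * Y ^ (p₀ / p)) := by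
    have e4 : (1 : ℝ) / (p / (p - p₀)) = (p - p₀) / p := by field_simp
    have e5 : (1 : ℝ) / (p / p₀) = p₀ / p := by field_simp
    rw [e4, e5] at hHolder
    calc X ^ (((n : ℝ) - p₀) / n) ≤ A * ∫ x, ‖fderiv ℝ v x‖ ^ p₀ := h1
      _ = A * γ ^ p₀ * ∫ x, f x * g x := by rw [h2]; ring
      _ ≤ A * γ ^ p₀ * (X ^ ((p - p₀) / p) * Y ^ (p₀ / p)) := by
          exact mul_le_mul_of_nonneg_left hHolder hC.le
  -- conclude
  show X ^ (((n : ℝ) - p) / n) ≤ (A * γ ^ p₀) ^ (p / p₀) * Y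
  rcases eq_or_lt_of_le hX0 with hX | hX
  · rw [← hX, Real.zero_rpow (by positivity : ((n : ℝ) - p) / n ≠ 0)]
    exact mul_nonneg (Real.rpow_nonneg hC.le _) hY0
  · have hstep : X ^ (p₀ * ((n : ℝ) - p) / (n * p)) ≤ A * γ ^ p₀ * Y ^ (p₀ / p) := by
      have e6 : p₀ * ((n : ℝ) - p) / (n * p) = ((n : ℝ) - p₀) / n - (p - p₀) / p := by
        field_simp; ring
      rw [e6, Real.rpow_sub hX, div_le_iff₀ (Real.rpow_pos_of_pos hX _)]
      calc X ^ (((n : ℝ) - p₀) / n)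
          ≤ A * γ ^ p₀ * (X ^ ((p - p₀) / p) * Y ^ (p₀ / p)) := h3
        _ = A * γ ^ p₀ * Y ^ (p₀ / p) * X ^ ((p - p₀) / p) := by ring
    have hfin := Real.rpow_le_rpow (Real.rpow_nonneg hX0 _) hstep
      (by positivity : (0:ℝ) ≤ p / p₀)
    rw [← Real.rpow_mul hX0, Real.mul_rpow hC.le (Real.rpow_nonneg hY0 _),
      ← Real.rpow_mul hY0] at hfin
    have e7 : p₀ * ((n : ℝ) - p) / (n * p) * (p / p₀) = ((n : ℝ) - p) / n := by
      field_simp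
    have e8 : p₀ / p * (p / p₀) = 1 := by field_simp
    rw [e7, e8, Real.rpow_one] at hfin
    exact hfin
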